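/- arXiv:1112.6189 — 2 statements merged into one kernel-verified Lean document; each statement's English description precedes it below -/
import Mathlib

section
/- Let m, n ≥ 0. Then Q^{(n)}·P^{(m)} = P^{(m)}·Q^{(n)} + P^{(m−1)}·Q^{(n−1)} in A. (This is the case ⟨i,j⟩ = −1 of the commutation relations of Lemma 1 for the quantum Heisenberg algebra, for two adjacent nodes of the Dynkin diagram.) -/
noncomputable def qint (n : ℤ) : RatFunc ℚ :=
  (RatFunc.X ^ n - RatFunc.X ^ (-n)) / (RatFunc.X - RatFunc.X⁻¹)

lemma X_pow_ne_one (j : ℕ) (hj : 1 ≤ j) : (RatFunc.X : RatFunc ℚ) ^ j ≠ 1 := by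
  intro h
  have h2 : (algebraMap (Polynomial ℚ) (RatFunc ℚ)) (Polynomial.X ^ j) =
      (algebraMap (Polynomial ℚ) (RatFunc ℚ)) 1 := by
    simpa [map_pow, RatFunc.algebraMap_X] using h
  have h3 : (Polynomial.X : Polynomial ℚ) ^ j = 1 := RatFunc.algebraMap_injective ℚ h2
  have h4 := congrArg (Polynomial.eval (0:ℚ)) h3
  simp [zero_pow (by omega : j ≠ 0)] at h4

lemma qint_ne_zero (k : ℕ) (hk : 1 ≤ k) : qint (k : ℤ) ≠ 0 := by
  have hX : (RatFunc.X : RatFunc ℚ) ≠ 0 := RatFunc.X_ne_zero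
  have hnum : (RatFunc.X : RatFunc ℚ) ^ (k:ℤ) - RatFunc.X ^ (-(k:ℤ)) ≠ 0 := by
    rw [zpow_neg, zpow_natCast]
    intro h
    have hu : (RatFunc.X : RatFunc ℚ)^k ≠ 0 := pow_ne_zero _ hX
    have h1 : (RatFunc.X:RatFunc ℚ)^k = ((RatFunc.X:RatFunc ℚ)^k)⁻¹ := sub_eq_zero.mp h
    have h2 : (RatFunc.X:RatFunc ℚ)^(2*k) = 1 := by
      rw [two_mul, pow_add]
      nth_rewrite 2 [h1]
      exact mul_inv_cancel₀ hu
    exact X_pow_ne_one (2*k) (by omega) h2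
  have hden : (RatFunc.X : RatFunc ℚ) - RatFunc.X⁻¹ ≠ 0 := by
    intro h
    have h1 : (RatFunc.X:RatFunc ℚ) = (RatFunc.X:RatFunc ℚ)⁻¹ := sub_eq_zero.mp h
    have h2 : (RatFunc.X:RatFunc ℚ)^2 = 1 := by
      rw [sq]
      nth_rewrite 2 [h1]
      exact mul_inv_cancel₀ hX
    exact X_pow_ne_one 2 (by omega) h2
  exact div_ne_zero hnum hden

instance : CharZero (RatFunc ℚ) :=
  charZero_of_injective_algebraMap (RatFunc.algebraMap_injective ℚ)

lemma telescope_aux {A : Type*} [AddCommGroup A] (f : ℕ → A) (n : ℕ) (hn : 1 ≤ n) :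
    ∑ k ∈ Finset.Icc 1 n, (f k - f (k+1)) = f 1 - f (n+1) := by
  induction n, hn using Nat.le_induction with
  | base => simp
  | succ n hn ih => rw [Finset.sum_Icc_succ_top (by omega), ih]; abel

lemma sumRec {A : Type*} [Ring A] [Algebra (RatFunc ℚ) A] (x : ℕ → A) (R : ℤ → A)
    (hneg : ∀ k : ℤ, k < 0 → R k = 0)
    (hrec : ∀ n : ℕ, 1 ≤ n → (n : RatFunc ℚ) • R n =
        ∑ l ∈ Finset.Icc 1 n, ((l : RatFunc ℚ) / qint l) • (x l * R ((n:ℤ) - l)))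
    (N : ℕ) (j : ℤ) (hj : j ≤ N) :
    ∑ l ∈ Finset.Icc 1 N, ((l : RatFunc ℚ) / qint l) • (x l * R (j - l)) =
      (j : RatFunc ℚ) • R j := by
  rcases lt_or_ge j 1 with hj1 | hj1
  · have hz : ∑ l ∈ Finset.Icc 1 N, ((l : RatFunc ℚ) / qint l) • (x l * R (j - l)) = 0 := by
      refine Finset.sum_eq_zero fun l hl => ?_
      simp only [Finset.mem_Icc] at hl
      rw [hneg (j - l) (by omega), mul_zero, smul_zero]
    rcases lt_or_ge j 0 with hj0 | hj0
    · rw [hz, hneg j hj0, smul_zero]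
    · have : j = 0 := by omega
      subst this
      rw [hz, Int.cast_zero, zero_smul]
  · obtain ⟨n, rfl⟩ : ∃ n : ℕ, j = (n:ℤ) := ⟨j.toNat, (Int.toNat_of_nonneg (by omega)).symm⟩
    have hn1 : 1 ≤ n := by omega
    have hnN : n ≤ N := by omega
    rw [Int.cast_natCast, hrec n hn1]
    symm
    refine Finset.sum_subset (Finset.Icc_subset_Icc_right hnN) fun l hl hl' => ?_
    simp only [Finset.mem_Icc] at hl hl'
    rw [hneg ((n:ℤ) - l) (by omega), mul_zero, smul_zero]

lemma haP_aux {A : Type*} [Ring A] [Algebra (RatFunc ℚ) A]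
    (b a : ℕ → A) (P : ℤ → A)
    (hP0 : P 0 = 1)
    (hPneg : ∀ k : ℤ, k < 0 → P k = 0)
    (hPrec : ∀ n : ℕ, 1 ≤ n → (n : RatFunc ℚ) • P n =
        ∑ l ∈ Finset.Icc 1 n, ((l : RatFunc ℚ) / qint l) • (b l * P ((n : ℤ) - l)))
    (hcomm : ∀ k l : ℕ, 1 ≤ k → 1 ≤ l →
      a k * b l - b l * a k =
        if k = l then (((-1 : RatFunc ℚ) ^ (k + 1) * qint k ^ 2 / (k : RatFunc ℚ)) • (1 : A))
        else 0)
    (k : ℕ) (hk : 1 ≤ k) :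
    ∀ (M : ℕ) (j : ℤ), j ≤ M →
      a k * P j - P j * a k =
        ((-1 : RatFunc ℚ) ^ (k + 1) * qint k ^ 2 / (k : RatFunc ℚ) / qint k) • P (j - k) := by
  intro M
  induction M with
  | zero =>
    intro j hj
    rcases eq_or_lt_of_le hj with hj0 | hj0
    · rw [hj0]
      simp only [Nat.cast_zero, zero_sub, hP0, mul_one, one_mul, sub_self]
      rw [hPneg (-(k:ℤ)) (by omega), smul_zero]
    · rw [hPneg j (by omega), hPneg (j - k) (by omega), mul_zero, zero_mul, sub_self, smul_zero]
  | succ M ihM =>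
    intro j hj
    rcases lt_or_ge j (M+1 : ℕ) with h | h
    · exact ihM j (by omega)
    · have hj' : j = ((M+1 : ℕ) : ℤ) := by omega
      subst hj'
      have hn0 : ((M+1:ℕ) : RatFunc ℚ) ≠ 0 := Nat.cast_ne_zero.mpr (Nat.succ_ne_zero M)
      apply smul_right_injective A hn0
      show ((M+1:ℕ) : RatFunc ℚ) • (a k * P ((M+1:ℕ):ℤ) - P ((M+1:ℕ):ℤ) * a k) =
        ((M+1:ℕ) : RatFunc ℚ) •
          (((-1 : RatFunc ℚ) ^ (k + 1) * qint k ^ 2 / (k : RatFunc ℚ) / qint k) •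
            P (((M+1:ℕ):ℤ) - k))
      calc ((M+1:ℕ) : RatFunc ℚ) • (a k * P ((M+1:ℕ):ℤ) - P ((M+1:ℕ):ℤ) * a k)
          = a k * (((M+1:ℕ) : RatFunc ℚ) • P ((M+1:ℕ):ℤ)) -
              (((M+1:ℕ) : RatFunc ℚ) • P ((M+1:ℕ):ℤ)) * a k := by
            rw [smul_sub, mul_smul_comm, smul_mul_assoc]
        _ = a k * (∑ l ∈ Finset.Icc 1 (M+1), ((l : RatFunc ℚ) / qint l) •
                (b l * P (((M+1:ℕ):ℤ) - l))) -
              (∑ l ∈ Finset.Icc 1 (M+1), ((l : RatFunc ℚ) / qint l) •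
                (b l * P (((M+1:ℕ):ℤ) - l))) * a k := by
            rw [hPrec (M+1) (by omega)]
        _ = ∑ l ∈ Finset.Icc 1 (M+1), ((l : RatFunc ℚ) / qint l) •
              (a k * (b l * P (((M+1:ℕ):ℤ) - l)) - (b l * P (((M+1:ℕ):ℤ) - l)) * a k) := by
            rw [Finset.mul_sum, Finset.sum_mul, ← Finset.sum_sub_distrib]
            refine Finset.sum_congr rfl fun l hl => ?_
            rw [smul_sub, mul_smul_comm, smul_mul_assoc]
        _ = ∑ l ∈ Finset.Icc 1 (M+1),
              ((if k = l then
                  (((k : RatFunc ℚ) / qint k) *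
                    ((-1 : RatFunc ℚ) ^ (k + 1) * qint k ^ 2 / (k : RatFunc ℚ))) •
                  P (((M+1:ℕ):ℤ) - k)
                else 0) +
              ((-1 : RatFunc ℚ) ^ (k + 1) * qint k ^ 2 / (k : RatFunc ℚ) / qint k) •
                (((l : RatFunc ℚ) / qint l) •
                  (b l * P ((((M+1:ℕ):ℤ) - k) - l)))) := by
            refine Finset.sum_congr rfl fun l hl => ?_
            simp only [Finset.mem_Icc] at hl
            have hl1 : 1 ≤ l := hl.1
            have h2 : a k * P (((M+1:ℕ):ℤ) - l) =
                ((-1 : RatFunc ℚ) ^ (k + 1) * qint k ^ 2 / (k : RatFunc ℚ) / qint k) •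
                  P (((M+1:ℕ):ℤ) - l - k) + P (((M+1:ℕ):ℤ) - l) * a k := by
              rw [← sub_eq_iff_eq_add]
              exact ihM (((M+1:ℕ):ℤ) - l) (by omega)
            by_cases hkl : k = l
            · subst hkl
              simp only [if_pos rfl]
              have h1 : a k * b k =
                  ((-1 : RatFunc ℚ) ^ (k + 1) * qint k ^ 2 / (k : RatFunc ℚ)) • (1:A) +
                    b k * a k := by
                rw [← sub_eq_iff_eq_add]
                simpa using hcomm k k hk hk
              have e1 : a k * (b k * P (((M+1:ℕ):ℤ) - k)) -
                  (b k * P (((M+1:ℕ):ℤ) - k)) * a k =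
                  ((-1 : RatFunc ℚ) ^ (k + 1) * qint k ^ 2 / (k : RatFunc ℚ)) •
                    P (((M+1:ℕ):ℤ) - k) +
                  ((-1 : RatFunc ℚ) ^ (k + 1) * qint k ^ 2 / (k : RatFunc ℚ) / qint k) •
                    (b k * P (((M+1:ℕ):ℤ) - k - k)) := by
                rw [← mul_assoc, h1, add_mul, smul_mul_assoc, one_mul, mul_assoc, h2,
                  mul_add, mul_smul_comm, ← mul_assoc]
                abel
              rw [e1, smul_add, smul_smul, smul_smul, smul_smul]
              congr 1
              rw [mul_comm]
            · simp only [if_neg hkl, zero_add]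
              have h1 : a k * b l = b l * a k := by
                have := hcomm k l hk hl1
                rw [if_neg hkl] at this
                exact sub_eq_zero.mp this
              have e1 : a k * (b l * P (((M+1:ℕ):ℤ) - l)) -
                  (b l * P (((M+1:ℕ):ℤ) - l)) * a k =
                  ((-1 : RatFunc ℚ) ^ (k + 1) * qint k ^ 2 / (k : RatFunc ℚ) / qint k) •
                    (b l * P (((M+1:ℕ):ℤ) - l - k)) := by
                rw [← mul_assoc, h1, mul_assoc, h2, mul_add, mul_smul_comm, ← mul_assoc]
                abel
              rw [e1, smul_comm, sub_right_comm]
        _ = (if k ∈ Finset.Icc 1 (M+1) then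
                (((k : RatFunc ℚ) / qint k) *
                  ((-1 : RatFunc ℚ) ^ (k + 1) * qint k ^ 2 / (k : RatFunc ℚ))) •
                P (((M+1:ℕ):ℤ) - k)
              else 0) +
            ((-1 : RatFunc ℚ) ^ (k + 1) * qint k ^ 2 / (k : RatFunc ℚ) / qint k) •
              (∑ l ∈ Finset.Icc 1 (M+1), ((l : RatFunc ℚ) / qint l) •
                (b l * P ((((M+1:ℕ):ℤ) - k) - l))) := by
            rw [Finset.sum_add_distrib, Finset.sum_ite_eq, Finset.smul_sum]
        _ = (if k ∈ Finset.Icc 1 (M+1) then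
                (((k : RatFunc ℚ) / qint k) *
                  ((-1 : RatFunc ℚ) ^ (k + 1) * qint k ^ 2 / (k : RatFunc ℚ))) •
                P (((M+1:ℕ):ℤ) - k)
              else 0) +
            ((-1 : RatFunc ℚ) ^ (k + 1) * qint k ^ 2 / (k : RatFunc ℚ) / qint k) •
              (((((M+1:ℕ):ℤ) - k : ℤ) : RatFunc ℚ) • P (((M+1:ℕ):ℤ) - k)) := by
            rw [sumRec b P hPneg hPrec (M+1) (((M+1:ℕ):ℤ) - k) (by omega)]
        _ = ((M+1:ℕ) : RatFunc ℚ) •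
              (((-1 : RatFunc ℚ) ^ (k + 1) * qint k ^ 2 / (k : RatFunc ℚ) / qint k) •
                P (((M+1:ℕ):ℤ) - k)) := by
            by_cases hmem : k ∈ Finset.Icc 1 (M+1)
            · simp only [Finset.mem_Icc] at hmem
              rw [if_pos (by simp only [Finset.mem_Icc]; exact hmem), smul_smul, smul_smul,
                ← add_smul]
              congr 1
              push_cast
              ring
            · simp only [Finset.mem_Icc] at hmem
              rw [if_neg (by simp only [Finset.mem_Icc]; exact hmem),
                hPneg (((M+1:ℕ):ℤ) - k) (by omega)]
              simp

/-- Lemma 1 (case `⟨i,j⟩ = -1`): `Q^{(n)} P^{(m)} = P^{(m)} Q^{(n)} + P^{(m-1)} Q^{(n-1)}`. -/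
theorem heisenberg_QP_adjacent_nodes
    {A : Type*} [Ring A] [Algebra (RatFunc ℚ) A]
    (b a : ℕ → A)
    (hb : ∀ m m' : ℕ, Commute (b m) (b m'))
    (ha : ∀ m m' : ℕ, Commute (a m) (a m'))
    (P Q : ℤ → A)
    (hP0 : P 0 = 1)
    (hPneg : ∀ k : ℤ, k < 0 → P k = 0)
    (hPrec : ∀ n : ℕ, 1 ≤ n →
      (n : RatFunc ℚ) • P n =
        ∑ m ∈ Finset.Icc 1 n, ((m : RatFunc ℚ) / qint m) • (b m * P ((n : ℤ) - m)))
    (hQ0 : Q 0 = 1)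
    (hQneg : ∀ k : ℤ, k < 0 → Q k = 0)
    (hQrec : ∀ n : ℕ, 1 ≤ n →
      (n : RatFunc ℚ) • Q n =
        ∑ m ∈ Finset.Icc 1 n, ((m : RatFunc ℚ) / qint m) • (a m * Q ((n : ℤ) - m)))
    (hcomm : ∀ m m' : ℕ, 1 ≤ m → 1 ≤ m' →
      a m * b m' - b m' * a m =
        if m = m' then
          (((-1 : RatFunc ℚ) ^ (m + 1) * qint m ^ 2 / (m : RatFunc ℚ)) • (1 : A))
        else 0)
    (m n : ℕ) :
    Q n * P m = P m * Q n + P ((m : ℤ) - 1) * Q ((n : ℤ) - 1) := by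
  have hqc : ∀ k : ℕ, 1 ≤ k →
      ((k : RatFunc ℚ) / qint k) *
        ((-1 : RatFunc ℚ) ^ (k + 1) * qint k ^ 2 / (k : RatFunc ℚ) / qint k) =
        (-1 : RatFunc ℚ) ^ (k + 1) := by
    intro k hk
    have h1 : qint (k : ℤ) ≠ 0 := qint_ne_zero k hk
    have h2 : ((k : ℕ) : RatFunc ℚ) ≠ 0 := Nat.cast_ne_zero.mpr (by omega)
    field_simp
  induction n using Nat.strong_induction_on with
  | _ n ih =>
    rcases Nat.eq_zero_or_pos n with hn | hn
    · subst hn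
      simp only [Nat.cast_zero, hQ0, one_mul, mul_one, zero_sub,
        hQneg (-1) (by omega), mul_zero, add_zero]
    · have hn0 : ((n : ℕ) : RatFunc ℚ) ≠ 0 := Nat.cast_ne_zero.mpr (by omega)
      have hA1 : ∀ k : ℕ, 1 ≤ k → a k * P (m : ℤ) =
          ((-1 : RatFunc ℚ) ^ (k + 1) * qint k ^ 2 / (k : RatFunc ℚ) / qint k) •
            P ((m : ℤ) - k) + P (m : ℤ) * a k := by
        intro k hk
        rw [← sub_eq_iff_eq_add]
        exact haP_aux b a P hP0 hPneg hPrec hcomm k hk m (m : ℤ) le_rfl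
      have hA2 : ∀ k : ℕ, 1 ≤ k → a k * P ((m : ℤ) - 1) =
          ((-1 : RatFunc ℚ) ^ (k + 1) * qint k ^ 2 / (k : RatFunc ℚ) / qint k) •
            P (((m : ℤ) - 1) - k) + P ((m : ℤ) - 1) * a k := by
        intro k hk
        rw [← sub_eq_iff_eq_add]
        exact haP_aux b a P hP0 hPneg hPrec hcomm k hk m ((m : ℤ) - 1) (by omega)
      have htel : ∑ k ∈ Finset.Icc 1 n, ((-1 : RatFunc ℚ) ^ (k + 1)) •
            (P ((m : ℤ) - k) * Q ((n : ℤ) - k) +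
              P (((m : ℤ) - 1) - k) * Q (((n : ℤ) - 1) - k)) =
          P ((m : ℤ) - 1) * Q ((n : ℤ) - 1) := by
        have h1 : ∀ k ∈ Finset.Icc 1 n, ((-1 : RatFunc ℚ) ^ (k + 1)) •
              (P ((m : ℤ) - k) * Q ((n : ℤ) - k) +
                P (((m : ℤ) - 1) - k) * Q (((n : ℤ) - 1) - k)) =
            (fun k : ℕ => ((-1 : RatFunc ℚ) ^ (k + 1)) •
              (P ((m : ℤ) - k) * Q ((n : ℤ) - k))) k -
            (fun k : ℕ => ((-1 : RatFunc ℚ) ^ (k + 1)) •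
              (P ((m : ℤ) - k) * Q ((n : ℤ) - k))) (k + 1) := by
          intro k hk
          simp only
          have i1 : ((m : ℤ) - 1) - k = (m : ℤ) - (k + 1 : ℕ) := by push_cast; ring
          have i2 : ((n : ℤ) - 1) - k = (n : ℤ) - (k + 1 : ℕ) := by push_cast; ring
          have i4 : ((-1 : RatFunc ℚ) ^ (k + 1 + 1)) = -((-1 : RatFunc ℚ) ^ (k + 1)) := by
            ring
          rw [i1, i2, i4, neg_smul, sub_neg_eq_add, smul_add]
        rw [Finset.sum_congr rfl h1, telescope_aux _ n hn]
        have i3 : (n : ℤ) - ((n + 1 : ℕ) : ℤ) = -1 := by push_cast; ring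
        rw [i3, hQneg (-1) (by omega), mul_zero, smul_zero, sub_zero, Nat.cast_one]
        norm_num
      have hinj := smul_right_injective A hn0
      apply hinj
      show ((n : ℕ) : RatFunc ℚ) • (Q (n : ℤ) * P (m : ℤ)) =
        ((n : ℕ) : RatFunc ℚ) •
          (P (m : ℤ) * Q (n : ℤ) + P ((m : ℤ) - 1) * Q ((n : ℤ) - 1))
      calc ((n : ℕ) : RatFunc ℚ) • (Q (n : ℤ) * P (m : ℤ))
          = (((n : ℕ) : RatFunc ℚ) • Q (n : ℤ)) * P (m : ℤ) := by rw [smul_mul_assoc]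
        _ = (∑ k ∈ Finset.Icc 1 n, ((k : RatFunc ℚ) / qint k) •
              (a k * Q ((n : ℤ) - k))) * P (m : ℤ) := by rw [hQrec n hn]
        _ = ∑ k ∈ Finset.Icc 1 n, ((k : RatFunc ℚ) / qint k) •
              (a k * (Q ((n : ℤ) - k) * P (m : ℤ))) := by
            rw [Finset.sum_mul]
            exact Finset.sum_congr rfl fun k hk => by rw [smul_mul_assoc, mul_assoc]
        _ = ∑ k ∈ Finset.Icc 1 n, ((k : RatFunc ℚ) / qint k) •
              (a k * (P (m : ℤ) * Q ((n : ℤ) - k) +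
                P ((m : ℤ) - 1) * Q (((n : ℤ) - 1) - k))) := by
            refine Finset.sum_congr rfl fun k hk => ?_
            simp only [Finset.mem_Icc] at hk
            have h := ih (n - k) (by omega)
            have hc1 : ((n - k : ℕ) : ℤ) = (n : ℤ) - k := by omega
            rw [hc1] at h
            rw [sub_right_comm] at h
            rw [h]
        _ = ∑ k ∈ Finset.Icc 1 n,
              (((k : RatFunc ℚ) / qint k) • (P (m : ℤ) * (a k * Q ((n : ℤ) - k)))
              + ((k : RatFunc ℚ) / qint k) •
                  (P ((m : ℤ) - 1) * (a k * Q (((n : ℤ) - 1) - k)))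
              + (((k : RatFunc ℚ) / qint k) *
                  ((-1 : RatFunc ℚ) ^ (k + 1) * qint k ^ 2 / (k : RatFunc ℚ) / qint k)) •
                  (P ((m : ℤ) - k) * Q ((n : ℤ) - k) +
                    P (((m : ℤ) - 1) - k) * Q (((n : ℤ) - 1) - k))) := by
            refine Finset.sum_congr rfl fun k hk => ?_
            simp only [Finset.mem_Icc] at hk
            have e : a k * (P (m : ℤ) * Q ((n : ℤ) - k) +
                P ((m : ℤ) - 1) * Q (((n : ℤ) - 1) - k)) =
                P (m : ℤ) * (a k * Q ((n : ℤ) - k)) +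
                P ((m : ℤ) - 1) * (a k * Q (((n : ℤ) - 1) - k)) +
                ((-1 : RatFunc ℚ) ^ (k + 1) * qint k ^ 2 / (k : RatFunc ℚ) / qint k) •
                  (P ((m : ℤ) - k) * Q ((n : ℤ) - k) +
                    P (((m : ℤ) - 1) - k) * Q (((n : ℤ) - 1) - k)) := by
              rw [mul_add, ← mul_assoc, ← mul_assoc, hA1 k hk.1, hA2 k hk.1,
                add_mul, add_mul, smul_mul_assoc, smul_mul_assoc, mul_assoc, mul_assoc,
                smul_add]
              abel
            rw [e, smul_add, smul_add, smul_smul]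
        _ = P (m : ℤ) * (∑ k ∈ Finset.Icc 1 n, ((k : RatFunc ℚ) / qint k) •
              (a k * Q ((n : ℤ) - k)))
            + P ((m : ℤ) - 1) * (∑ k ∈ Finset.Icc 1 n, ((k : RatFunc ℚ) / qint k) •
              (a k * Q (((n : ℤ) - 1) - k)))
            + ∑ k ∈ Finset.Icc 1 n, ((-1 : RatFunc ℚ) ^ (k + 1)) •
              (P ((m : ℤ) - k) * Q ((n : ℤ) - k) +
                P (((m : ℤ) - 1) - k) * Q (((n : ℤ) - 1) - k)) := by
            rw [Finset.sum_add_distrib, Finset.sum_add_distrib, Finset.mul_sum, Finset.mul_sum]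
            congr 1
            · congr 1
              · exact Finset.sum_congr rfl fun k hk => (mul_smul_comm _ _ _).symm
              · exact Finset.sum_congr rfl fun k hk => (mul_smul_comm _ _ _).symm
            · refine Finset.sum_congr rfl fun k hk => ?_
              simp only [Finset.mem_Icc] at hk
              rw [hqc k hk.1]
        _ = P (m : ℤ) * ((((n : ℕ) : ℤ) : RatFunc ℚ) • Q (n : ℤ))
            + P ((m : ℤ) - 1) * ((((n : ℤ) - 1 : ℤ) : RatFunc ℚ) • Q ((n : ℤ) - 1))
            + P ((m : ℤ) - 1) * Q ((n : ℤ) - 1) := by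
            rw [sumRec a Q hQneg hQrec n ((n : ℕ) : ℤ) le_rfl,
              sumRec a Q hQneg hQrec n ((n : ℤ) - 1) (by omega), htel]
        _ = ((n : ℕ) : RatFunc ℚ) •
              (P (m : ℤ) * Q (n : ℤ) + P ((m : ℤ) - 1) * Q ((n : ℤ) - 1)) := by
            rw [mul_smul_comm, mul_smul_comm, smul_add]
            push_cast
            rw [sub_smul, one_smul]
            abel
end

section
/- Let m, n ≥ 0. Then Q^{(1^n)}·P^{(1^m)} = Σ_{k=0}^{min(m,n)} [k+1]·P^{(1^{m−k})}·Q^{(1^{n−k})} in A. In other words, the commutation relations among the elements P^{(1^n)}, Q^{(1^n)} are the same as those among the P^{(n)}, Q^{(n)} (as asserted for the involution ψ of the quantum Heisenberg algebra). -/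
open Finset



instance inst_s4 : CharZero (RatFunc ℚ) :=
  charZero_of_injective_algebraMap (algebraMap ℚ (RatFunc ℚ)).injective

lemma myX_ne : (RatFunc.X : RatFunc ℚ) ≠ 0 := RatFunc.X_ne_zero

lemma myX_zpow_eq_one {k : ℤ} (h : (RatFunc.X : RatFunc ℚ) ^ k = 1) : k = 0 := by
  have key : ∀ j : ℕ, (RatFunc.X : RatFunc ℚ) ^ (j:ℤ) = 1 → j = 0 := by
    intro j hj
    rw [zpow_natCast, ← RatFunc.algebraMap_X (K := ℚ), ← map_pow,
      ← map_one (algebraMap (Polynomial ℚ) (RatFunc ℚ))] at hj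
    have h2 := RatFunc.algebraMap_injective (K := ℚ) hj
    have := congrArg Polynomial.natDegree h2
    simpa using this
  rcases le_or_gt 0 k with hk | hk
  · lift k to ℕ using hk
    exact_mod_cast key _ h
  · have : (RatFunc.X : RatFunc ℚ) ^ (-k) = 1 := by
      rw [zpow_neg, h, inv_one]
    lift (-k) to ℕ using (by omega) with j hj
    have := key j this
    omega

lemma denom_ne : (RatFunc.X : RatFunc ℚ) - RatFunc.X⁻¹ ≠ 0 := by
  intro h
  have h2 : (RatFunc.X : RatFunc ℚ) ^ (2:ℤ) = 1 := by
    have hx : (RatFunc.X : RatFunc ℚ) = RatFunc.X⁻¹ := by linear_combination h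
    have : (RatFunc.X : RatFunc ℚ) * RatFunc.X = 1 := by
      nth_rewrite 2 [hx]; exact mul_inv_cancel₀ myX_ne
    rw [show (2:ℤ) = 1 + 1 by norm_num, zpow_add₀ myX_ne, zpow_one]; exact this
  exact absurd (myX_zpow_eq_one h2) (by norm_num)

lemma qint_mul (n : ℤ) :
    qint n * (RatFunc.X - RatFunc.X⁻¹) = RatFunc.X ^ n - RatFunc.X ^ (-n) :=
  div_mul_cancel₀ _ denom_ne

lemma qint_ne_zero_s4 {n : ℤ} (h : n ≠ 0) : qint n ≠ 0 := by
  intro h0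
  have h1 : (RatFunc.X : RatFunc ℚ) ^ n - RatFunc.X ^ (-n) = 0 := by
    rw [← qint_mul, h0, zero_mul]
  have h2 : (RatFunc.X : RatFunc ℚ) ^ (n + n) = 1 := by
    rw [zpow_add₀ myX_ne]
    have : (RatFunc.X : RatFunc ℚ) ^ n = RatFunc.X ^ (-n) := by linear_combination h1
    nth_rewrite 2 [this]
    rw [← zpow_add₀ myX_ne]; simp
  have := myX_zpow_eq_one h2
  omega

lemma qint_one : qint 1 = 1 := by
  unfold qint
  rw [zpow_one, zpow_neg, zpow_one, div_self denom_ne]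

lemma qint_two_mul (n : ℤ) :
    qint (2 * n) = (RatFunc.X ^ n + RatFunc.X ^ (-n)) * qint n := by
  apply mul_right_cancel₀ denom_ne
  rw [qint_mul, mul_assoc, qint_mul]
  have e : ∀ a b : ℤ, (RatFunc.X : RatFunc ℚ) ^ (a + b) = RatFunc.X ^ a * RatFunc.X ^ b :=
    fun a b => zpow_add₀ myX_ne a b
  rw [show 2 * n = n + n by ring, show -(n+n) = -n + -n by ring, e, e]
  ring

lemma reflect_Icc {M : Type*} [AddCommMonoid M] (j : ℕ) (f : ℕ → M) :
    ∑ r ∈ Icc 1 j, f r = ∑ r ∈ Icc 1 j, f (j + 1 - r) := by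
  apply Finset.sum_nbij' (fun r => j + 1 - r) (fun r => j + 1 - r)
  all_goals intro a ha; simp [mem_Icc] at *
  · omega
  · omega
  · omega
  · omega
  · congr 1; omega

lemma qint_sum_identity (j : ℕ) :
    ∑ r ∈ Icc 1 j, (RatFunc.X ^ (r:ℤ) + RatFunc.X ^ (-(r:ℤ))) * qint ((j:ℤ) - r + 1)
      = (j : RatFunc ℚ) * qint ((j:ℤ) + 1) := by
  apply mul_right_cancel₀ denom_ne
  rw [Finset.sum_mul, mul_assoc, qint_mul]
  have e : ∀ a b : ℤ, (RatFunc.X : RatFunc ℚ) ^ (a + b) = RatFunc.X ^ a * RatFunc.X ^ b :=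
    fun a b => zpow_add₀ myX_ne a b
  have step : ∀ r ∈ Icc 1 j,
      (RatFunc.X ^ (r:ℤ) + RatFunc.X ^ (-(r:ℤ))) * qint ((j:ℤ) - r + 1) *
        (RatFunc.X - RatFunc.X⁻¹)
      = ((RatFunc.X : RatFunc ℚ) ^ ((j:ℤ)+1) - RatFunc.X ^ (-((j:ℤ)+1)))
        + ((RatFunc.X : RatFunc ℚ) ^ ((j:ℤ)+1-2*r) - RatFunc.X ^ (2*(r:ℤ)-j-1)) := by
    intro r hr
    rw [mul_assoc, qint_mul]
    have k2 : ∀ a b : ℤ, (RatFunc.X : RatFunc ℚ) ^ (a + b) = RatFunc.X ^ a * RatFunc.X ^ b :=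
      fun a b => zpow_add₀ myX_ne a b
    have k3 : ∀ a b c : ℤ, (RatFunc.X : RatFunc ℚ) ^ (a + b + c)
        = RatFunc.X ^ a * RatFunc.X ^ b * RatFunc.X ^ c := by
      intro a b c; rw [k2 (a+b) c, k2 a b]
    have hneg : ∀ a : ℤ, (RatFunc.X : RatFunc ℚ) ^ (-a) = (RatFunc.X ^ a)⁻¹ :=
      fun a => zpow_neg _ a
    have e_jr1 : (RatFunc.X : RatFunc ℚ) ^ ((j:ℤ)-r+1) = RatFunc.X ^ ((j:ℤ)-r) * RatFunc.X := by
      rw [k2 ((j:ℤ)-r) 1, zpow_one]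
    have e_njr1 : (RatFunc.X : RatFunc ℚ) ^ (-((j:ℤ)-r+1))
        = (RatFunc.X ^ ((j:ℤ)-r))⁻¹ * RatFunc.X⁻¹ := by
      rw [show -((j:ℤ)-r+1) = (-((j:ℤ)-r)) + (-1) by ring, k2, hneg, zpow_neg, zpow_one]
    have e_j1 : (RatFunc.X : RatFunc ℚ) ^ ((j:ℤ)+1)
        = RatFunc.X ^ (r:ℤ) * RatFunc.X ^ ((j:ℤ)-r) * RatFunc.X := by
      rw [show (j:ℤ)+1 = (r:ℤ)+((j:ℤ)-r)+1 by ring, k3, zpow_one]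
    have e_nj1 : (RatFunc.X : RatFunc ℚ) ^ (-((j:ℤ)+1))
        = (RatFunc.X ^ (r:ℤ))⁻¹ * (RatFunc.X ^ ((j:ℤ)-r))⁻¹ * RatFunc.X⁻¹ := by
      rw [show -((j:ℤ)+1) = (-(r:ℤ))+(-((j:ℤ)-r))+(-1) by ring, k3, hneg, hneg, zpow_neg, zpow_one]
    have e_mid1 : (RatFunc.X : RatFunc ℚ) ^ ((j:ℤ)+1-2*r)
        = (RatFunc.X ^ (r:ℤ))⁻¹ * RatFunc.X ^ ((j:ℤ)-r) * RatFunc.X := by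
      rw [show (j:ℤ)+1-2*r = (-(r:ℤ))+((j:ℤ)-r)+1 by ring, k3, hneg, zpow_one]
    have e_mid2 : (RatFunc.X : RatFunc ℚ) ^ (2*(r:ℤ)-j-1)
        = RatFunc.X ^ (r:ℤ) * (RatFunc.X ^ ((j:ℤ)-r))⁻¹ * RatFunc.X⁻¹ := by
      rw [show 2*(r:ℤ)-j-1 = (r:ℤ)+(-((j:ℤ)-r))+(-1) by ring, k3, hneg, zpow_neg, zpow_one]
    rw [e_jr1, e_njr1, e_j1, e_nj1, e_mid1, e_mid2, hneg]
    ring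
  rw [Finset.sum_congr rfl step, Finset.sum_add_distrib]
  have refl0 : ∑ r ∈ Icc 1 j,
      ((RatFunc.X : RatFunc ℚ) ^ ((j:ℤ)+1-2*r) - RatFunc.X ^ (2*(r:ℤ)-j-1)) = 0 := by
    rw [Finset.sum_sub_distrib, sub_eq_zero]
    rw [reflect_Icc j (fun r => (RatFunc.X : RatFunc ℚ) ^ ((j:ℤ)+1-2*(r:ℤ)))]
    apply Finset.sum_congr rfl
    intro r hr
    simp only [mem_Icc] at hr
    congr 1
    have : ((j + 1 - r : ℕ) : ℤ) = (j:ℤ) + 1 - r := by omega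
    rw [this]; ring
  rw [refl0, add_zero, Finset.sum_const, Nat.card_Icc]
  simp only [Nat.add_sub_cancel, nsmul_eq_mul]

lemma smul_cancel {A : Type*} [AddCommMonoid A] [Module (RatFunc ℚ) A]
    {c : RatFunc ℚ} (hc : c ≠ 0) {x y : A} (h : c • x = c • y) : x = y := by
  have := congrArg (fun z => c⁻¹ • z) h
  simpa [smul_smul, inv_mul_cancel₀ hc] using this

lemma commaP {A : Type*} [Ring A] [Algebra (RatFunc ℚ) A]
    (b a : ℕ → A) (P1 : ℤ → A)
    (hP10 : P1 0 = 1)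
    (hP1neg : ∀ k : ℤ, k < 0 → P1 k = 0)
    (hP1rec : ∀ n : ℕ, 1 ≤ n →
      (n : RatFunc ℚ) • P1 n =
        ∑ m ∈ Finset.Icc 1 n,
          ((-1 : RatFunc ℚ) ^ (m + 1) * (m : RatFunc ℚ) / qint m) • (b m * P1 ((n : ℤ) - m)))
    (hcomm : ∀ m m' : ℕ, 1 ≤ m → 1 ≤ m' →
      a m * b m' - b m' * a m =
        if m = m' then (qint (2 * m) * qint m / (m : RatFunc ℚ)) • (1 : A) else 0)
    (r : ℕ) (hr : 1 ≤ r) (n : ℤ) :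
    a r * P1 n - P1 n * a r
      = ((-1 : RatFunc ℚ) ^ (r + 1) * qint (2 * r) / (r : RatFunc ℚ)) • P1 (n - r) := by
  set κ : RatFunc ℚ := (-1 : RatFunc ℚ) ^ (r + 1) * qint (2 * r) / (r : RatFunc ℚ) with hκ
  set cc : ℕ → RatFunc ℚ :=
    fun m => (-1 : RatFunc ℚ) ^ (m + 1) * (m : RatFunc ℚ) / qint m with hcc
  set γ : RatFunc ℚ := qint (2 * r) * qint r / (r : RatFunc ℚ) with hγ
  have hrK : (r : RatFunc ℚ) ≠ 0 := Nat.cast_ne_zero.mpr (by omega)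
  have hqr : qint r ≠ 0 := qint_ne_zero_s4 (Int.natCast_ne_zero.mpr (by omega))
  have hfield : cc r * γ = (r : RatFunc ℚ) * κ := by
    rw [hcc, hγ, hκ]; field_simp
  suffices H : ∀ N : ℕ, ∀ n : ℤ, n ≤ N →
      a r * P1 n - P1 n * a r = κ • P1 (n - r) by
    exact H n.toNat n (Int.self_le_toNat n)
  intro N
  induction N with
  | zero =>
    intro n hn
    rcases lt_or_eq_of_le hn with hn' | hn'
    · rw [hP1neg n (by exact_mod_cast hn'), hP1neg (n - r) (by omega)]
      simp
    · rw [hn']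
      simp only [Nat.cast_zero]
      rw [hP10, hP1neg (0 - (r : ℤ)) (by omega)]
      simp
  | succ N ih =>
    intro n hn
    rcases le_or_gt n N with hn' | hn'
    · exact ih n hn'
    · have hnN : n = ((N + 1 : ℕ) : ℤ) := by push_cast; omega
      set ν : ℕ := N + 1 with hν
      clear_value ν
      rw [hnN]
      have hν1 : 1 ≤ ν := by omega
      have hνK : ((ν : ℕ) : RatFunc ℚ) ≠ 0 := Nat.cast_ne_zero.mpr (by omega)
      apply smul_cancel hνK
      have hsmul : (ν : RatFunc ℚ) • (a r * P1 ν - P1 ν * a r)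
          = ∑ m ∈ Finset.Icc 1 ν,
              cc m • (a r * (b m * P1 ((ν : ℤ) - m)) - (b m * P1 ((ν : ℤ) - m)) * a r) := by
        rw [smul_sub, ← mul_smul_comm, ← smul_mul_assoc, hP1rec ν hν1,
          Finset.mul_sum, Finset.sum_mul, ← Finset.sum_sub_distrib]
        exact Finset.sum_congr rfl fun m _ => by
          rw [mul_smul_comm, smul_mul_assoc, ← smul_sub]
      have term : ∀ m ∈ Finset.Icc 1 ν,
          cc m • (a r * (b m * P1 ((ν : ℤ) - m)) - (b m * P1 ((ν : ℤ) - m)) * a r)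
          = κ • (cc m • (b m * P1 (((ν : ℤ) - r) - m)))
            + (if r = m then cc r • (γ • P1 ((ν : ℤ) - m)) else 0) := by
        intro m hm
        have hm1 : 1 ≤ m := (Finset.mem_Icc.mp hm).1
        have ihm := ih ((ν : ℤ) - m) (by omega)
        rw [show (ν : ℤ) - m - r = (ν : ℤ) - r - m by ring] at ihm
        have hc := hcomm r m hr hm1
        have expand : a r * (b m * P1 ((ν : ℤ) - m)) - (b m * P1 ((ν : ℤ) - m)) * a r
            = b m * (a r * P1 ((ν : ℤ) - m) - P1 ((ν : ℤ) - m) * a r)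
              + (a r * b m - b m * a r) * P1 ((ν : ℤ) - m) := by noncomm_ring
        rw [expand, ihm, hc]
        split_ifs with hrm
        · subst hrm
          simp only [smul_mul_assoc, one_mul, mul_smul_comm, smul_add, smul_smul]
          rw [mul_comm (cc r) κ]
        · simp only [zero_mul, add_zero, mul_smul_comm, smul_smul]
          rw [mul_comm (cc m) κ]
      rw [hsmul, Finset.sum_congr rfl term, Finset.sum_add_distrib, ← Finset.smul_sum,
        Finset.sum_ite_eq]
      by_cases hrν : r ≤ ν
      · set d : ℕ := ν - r with hd
        clear_value d
        have hdZ : ((d : ℕ) : ℤ) = (ν : ℤ) - r := by omega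
        have hS : ∑ m ∈ Finset.Icc 1 ν, cc m • (b m * P1 ((ν : ℤ) - r - m))
            = (d : RatFunc ℚ) • P1 ((d : ℕ) : ℤ) := by
          rcases Nat.eq_zero_or_pos d with hd0 | hd1
          · have hz : ∀ m ∈ Finset.Icc 1 ν, cc m • (b m * P1 ((ν : ℤ) - r - m)) = 0 := by
              intro m hm
              have hm1 : 1 ≤ m := (Finset.mem_Icc.mp hm).1
              rw [hP1neg ((ν : ℤ) - r - m) (by omega), mul_zero, smul_zero]
            rw [Finset.sum_eq_zero hz, hd0]
            simp
          · have hsub : Finset.Icc 1 d ⊆ Finset.Icc 1 ν :=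
              Finset.Icc_subset_Icc_right (by omega)
            rw [← Finset.sum_subset hsub, hP1rec d hd1]
            · apply Finset.sum_congr rfl
              intro m hm
              rw [← hdZ]
            · intro m hm hm'
              simp only [Finset.mem_Icc] at hm hm'
              rw [hP1neg ((ν : ℤ) - r - m) (by omega), mul_zero, smul_zero]
        rw [hS, if_pos (Finset.mem_Icc.mpr ⟨hr, hrν⟩), ← hdZ]
        rw [smul_smul, smul_smul, smul_smul, ← add_smul]
        congr 1
        rw [hfield]
        have hcast : (d : RatFunc ℚ) + (r : RatFunc ℚ) = (ν : RatFunc ℚ) := by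
          exact_mod_cast congrArg (Nat.cast : ℕ → RatFunc ℚ) (by omega : d + r = ν)
        rw [← hcast]; ring
      · have h1 : ∀ m ∈ Finset.Icc 1 ν, cc m • (b m * P1 ((ν : ℤ) - r - m)) = 0 := by
          intro m hm
          have hm1 : 1 ≤ m := (Finset.mem_Icc.mp hm).1
          rw [hP1neg ((ν : ℤ) - r - m) (by omega), mul_zero, smul_zero]
        rw [Finset.sum_eq_zero h1, smul_zero, if_neg (by simp [Finset.mem_Icc]; omega),
          zero_add, hP1neg ((ν : ℤ) - r) (by omega)]
        simp

/-- The relations among the `P^{(1^n)}`, `Q^{(1^n)}` are the same as those among the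
`P^{(n)}`, `Q^{(n)}`:
`Q^{(1^n)} P^{(1^m)} = ∑_{k=0}^{min(m,n)} [k+1] P^{(1^{m-k})} Q^{(1^{n-k})}`. -/
theorem heisenberg_Q1P1_same_node
    {A : Type*} [Ring A] [Algebra (RatFunc ℚ) A]
    (b a : ℕ → A)
    (hb : ∀ m m' : ℕ, Commute (b m) (b m'))
    (ha : ∀ m m' : ℕ, Commute (a m) (a m'))
    (P1 Q1 : ℤ → A)
    (hP10 : P1 0 = 1)
    (hP1neg : ∀ k : ℤ, k < 0 → P1 k = 0)
    (hP1rec : ∀ n : ℕ, 1 ≤ n →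
      (n : RatFunc ℚ) • P1 n =
        ∑ m ∈ Finset.Icc 1 n,
          ((-1 : RatFunc ℚ) ^ (m + 1) * (m : RatFunc ℚ) / qint m) • (b m * P1 ((n : ℤ) - m)))
    (hQ10 : Q1 0 = 1)
    (hQ1neg : ∀ k : ℤ, k < 0 → Q1 k = 0)
    (hQ1rec : ∀ n : ℕ, 1 ≤ n →
      (n : RatFunc ℚ) • Q1 n =
        ∑ m ∈ Finset.Icc 1 n,
          ((-1 : RatFunc ℚ) ^ (m + 1) * (m : RatFunc ℚ) / qint m) • (a m * Q1 ((n : ℤ) - m)))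
    (hcomm : ∀ m m' : ℕ, 1 ≤ m → 1 ≤ m' →
      a m * b m' - b m' * a m =
        if m = m' then (qint (2 * m) * qint m / (m : RatFunc ℚ)) • (1 : A) else 0)
    (m n : ℕ) :
    Q1 n * P1 m =
      ∑ k ∈ Finset.range (min m n + 1),
        qint ((k : ℤ) + 1) • (P1 ((m : ℤ) - k) * Q1 ((n : ℤ) - k)) := by
  have commP := commaP b a P1 hP10 hP1neg hP1rec hcomm
  set cc : ℕ → RatFunc ℚ :=
    fun r => (-1 : RatFunc ℚ) ^ (r + 1) * (r : RatFunc ℚ) / qint r with hcc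
  have hcκ : ∀ r : ℕ, 1 ≤ r →
      cc r * ((-1 : RatFunc ℚ) ^ (r + 1) * qint (2 * r) / (r : RatFunc ℚ))
        = RatFunc.X ^ (r : ℤ) + RatFunc.X ^ (-(r : ℤ)) := by
    intro r hr
    have hrK : (r : RatFunc ℚ) ≠ 0 := Nat.cast_ne_zero.mpr (by omega)
    have hqr : qint r ≠ 0 := qint_ne_zero_s4 (Int.natCast_ne_zero.mpr (by omega))
    have hsign : ((-1 : RatFunc ℚ)) ^ (r + 1) * (-1) ^ (r + 1) = 1 := by
      rw [← pow_add, show (r + 1) + (r + 1) = 2 * (r + 1) by ring, pow_mul]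
      norm_num
    rw [hcc]
    simp only
    rw [qint_two_mul, div_mul_div_comm, div_eq_iff (mul_ne_zero hqr hrK)]
    linear_combination
      ((r : RatFunc ℚ) * qint r * (RatFunc.X ^ (r : ℤ) + RatFunc.X ^ (-(r : ℤ)))) * hsign
  -- auxiliary version with range (n+1)
  have aux : ∀ n : ℕ, Q1 n * P1 m
      = ∑ k ∈ Finset.range (n + 1),
          qint ((k : ℤ) + 1) • (P1 ((m : ℤ) - k) * Q1 ((n : ℤ) - k)) := by
    intro n
    induction n using Nat.strong_induction_on with
    | _ n IH =>
    rcases Nat.eq_zero_or_pos n with h0 | h1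
    · subst h0
      simp [Finset.sum_range_one, hQ10, qint_one]
    · have hνK : ((n : ℕ) : RatFunc ℚ) ≠ 0 := Nat.cast_ne_zero.mpr (by omega)
      apply smul_cancel hνK
      have inner : ∀ r ∈ Finset.Icc 1 n, Q1 ((n : ℤ) - r) * P1 m
          = ∑ k ∈ Finset.range (n + 1),
              qint ((k : ℤ) + 1) • (P1 ((m : ℤ) - k) * Q1 ((n : ℤ) - r - k)) := by
        intro r hr
        have hr1 : 1 ≤ r := (Finset.mem_Icc.mp hr).1
        have hrn : r ≤ n := (Finset.mem_Icc.mp hr).2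
        have e1 : ((n - r : ℕ) : ℤ) = (n : ℤ) - r := by omega
        rw [← e1, IH (n - r) (by omega)]
        apply Finset.sum_subset (Finset.range_subset_range.mpr (by omega))
        intro k hk hk'
        simp only [Finset.mem_range] at hk hk'
        rw [hQ1neg (((n - r : ℕ) : ℤ) - k) (by omega), mul_zero, smul_zero]
      have innerQ : ∀ k ∈ Finset.range (n + 1),
          ∑ r ∈ Finset.Icc 1 n, cc r • (a r * Q1 ((n : ℤ) - k - r))
          = ((n - k : ℕ) : RatFunc ℚ) • Q1 ((n : ℤ) - k) := by
        intro k hk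
        simp only [Finset.mem_range] at hk
        have hdZ : ((n - k : ℕ) : ℤ) = (n : ℤ) - k := by omega
        rcases Nat.eq_zero_or_pos (n - k) with hd0 | hd1
        · have hz : ∀ r ∈ Finset.Icc 1 n, cc r • (a r * Q1 ((n : ℤ) - k - r)) = 0 := by
            intro r hr
            have hr1 : 1 ≤ r := (Finset.mem_Icc.mp hr).1
            rw [hQ1neg ((n : ℤ) - k - r) (by omega), mul_zero, smul_zero]
          rw [Finset.sum_eq_zero hz, hd0]
          simp
        · have hsub : Finset.Icc 1 (n - k) ⊆ Finset.Icc 1 n :=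
            Finset.Icc_subset_Icc_right (by omega)
          rw [← hdZ]
          rw [← Finset.sum_subset hsub (fun r hr hr' => by
            simp only [Finset.mem_Icc] at hr hr'
            rw [hQ1neg (((n - k : ℕ) : ℤ) - r) (by omega), mul_zero, smul_zero])]
          rw [hQ1rec (n - k) hd1]
      calc (n : RatFunc ℚ) • (Q1 n * P1 m)
          = ∑ r ∈ Finset.Icc 1 n, cc r • (a r * (Q1 ((n : ℤ) - r) * P1 m)) := by
            rw [← smul_mul_assoc, hQ1rec n h1, Finset.sum_mul]
            exact Finset.sum_congr rfl fun r _ => by rw [smul_mul_assoc, mul_assoc]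
        _ = ∑ r ∈ Finset.Icc 1 n, ∑ k ∈ Finset.range (n + 1),
              (cc r * qint ((k : ℤ) + 1)) • (a r * (P1 ((m : ℤ) - k) * Q1 ((n : ℤ) - r - k))) := by
            refine Finset.sum_congr rfl fun r hr => ?_
            rw [inner r hr, Finset.mul_sum, Finset.smul_sum]
            exact Finset.sum_congr rfl fun k _ => by rw [mul_smul_comm, smul_smul]
        _ = ∑ r ∈ Finset.Icc 1 n, ∑ k ∈ Finset.range (n + 1),
              ( (cc r * qint ((k : ℤ) + 1)) •
                  (P1 ((m : ℤ) - k) * (a r * Q1 ((n : ℤ) - k - r)))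
                + ((RatFunc.X ^ (r : ℤ) + RatFunc.X ^ (-(r : ℤ))) * qint ((k : ℤ) + 1)) •
                  (P1 ((m : ℤ) - k - r) * Q1 ((n : ℤ) - k - r)) ) := by
            refine Finset.sum_congr rfl fun r hr => Finset.sum_congr rfl fun k _ => ?_
            have hr1 : 1 ≤ r := (Finset.mem_Icc.mp hr).1
            have h2 : a r * P1 ((m : ℤ) - k)
                = P1 ((m : ℤ) - k) * a r
                  + ((-1 : RatFunc ℚ) ^ (r + 1) * qint (2 * r) / (r : RatFunc ℚ)) •
                      P1 ((m : ℤ) - k - r) := by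
              have h := commP r hr1 ((m : ℤ) - k)
              rw [sub_eq_iff_eq_add] at h
              rw [h]
              exact add_comm _ _
            rw [show (n : ℤ) - r - k = (n : ℤ) - k - r by ring, ← mul_assoc, h2, add_mul,
              smul_mul_assoc, mul_assoc, smul_add, smul_smul,
              show cc r * qint ((k : ℤ) + 1) *
                  ((-1 : RatFunc ℚ) ^ (r + 1) * qint (2 * r) / (r : RatFunc ℚ))
                = (cc r * ((-1 : RatFunc ℚ) ^ (r + 1) * qint (2 * r) / (r : RatFunc ℚ)))
                    * qint ((k : ℤ) + 1) by ring,
              hcκ r hr1]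
        _ = (∑ r ∈ Finset.Icc 1 n, ∑ k ∈ Finset.range (n + 1),
              (cc r * qint ((k : ℤ) + 1)) •
                (P1 ((m : ℤ) - k) * (a r * Q1 ((n : ℤ) - k - r))))
            + ∑ r ∈ Finset.Icc 1 n, ∑ k ∈ Finset.range (n + 1),
              ((RatFunc.X ^ (r : ℤ) + RatFunc.X ^ (-(r : ℤ))) * qint ((k : ℤ) + 1)) •
                (P1 ((m : ℤ) - k - r) * Q1 ((n : ℤ) - k - r)) := by
            rw [← Finset.sum_add_distrib]
            exact Finset.sum_congr rfl fun r _ => by rw [← Finset.sum_add_distrib]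
        _ = (∑ k ∈ Finset.range (n + 1),
              (qint ((k : ℤ) + 1) * ((n - k : ℕ) : RatFunc ℚ)) •
                (P1 ((m : ℤ) - k) * Q1 ((n : ℤ) - k)))
            + ∑ j ∈ Finset.range (n + 1),
              ((j : RatFunc ℚ) * qint ((j : ℤ) + 1)) •
                (P1 ((m : ℤ) - j) * Q1 ((n : ℤ) - j)) := by
            congr 1
            · -- T1
              rw [Finset.sum_comm]
              refine Finset.sum_congr rfl fun k hk => ?_
              symm
              calc (qint ((k : ℤ) + 1) * ((n - k : ℕ) : RatFunc ℚ)) •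
                    (P1 ((m : ℤ) - k) * Q1 ((n : ℤ) - k))
                  = qint ((k : ℤ) + 1) • (P1 ((m : ℤ) - k) *
                      (((n - k : ℕ) : RatFunc ℚ) • Q1 ((n : ℤ) - k))) := by
                    rw [mul_smul_comm, smul_smul]
                _ = qint ((k : ℤ) + 1) • (P1 ((m : ℤ) - k) *
                      (∑ r ∈ Finset.Icc 1 n, cc r • (a r * Q1 ((n : ℤ) - k - r)))) := by
                    rw [innerQ k hk]
                _ = ∑ r ∈ Finset.Icc 1 n, (cc r * qint ((k : ℤ) + 1)) •
                      (P1 ((m : ℤ) - k) * (a r * Q1 ((n : ℤ) - k - r))) := by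
                    rw [Finset.mul_sum, Finset.smul_sum]
                    refine Finset.sum_congr rfl fun r _ => ?_
                    rw [mul_smul_comm, smul_smul, mul_comm (qint ((k : ℤ) + 1)) (cc r)]
            · -- T2
              have step1 : ∀ r ∈ Finset.Icc 1 n,
                  ∑ k ∈ Finset.range (n + 1),
                    ((RatFunc.X ^ (r : ℤ) + RatFunc.X ^ (-(r : ℤ))) * qint ((k : ℤ) + 1)) •
                      (P1 ((m : ℤ) - k - r) * Q1 ((n : ℤ) - k - r))
                  = ∑ j ∈ Finset.Icc r n,
                    ((RatFunc.X ^ (r : ℤ) + RatFunc.X ^ (-(r : ℤ))) * qint ((j : ℤ) - r + 1)) •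
                      (P1 ((m : ℤ) - j) * Q1 ((n : ℤ) - j)) := by
                intro r hr
                obtain ⟨hr1, hrn⟩ := Finset.mem_Icc.mp hr
                rw [← Finset.sum_subset (Finset.range_subset_range.mpr (by omega : n - r + 1 ≤ n + 1))
                  (fun k hk hk' => by
                    simp only [Finset.mem_range] at hk hk'
                    rw [hQ1neg ((n : ℤ) - k - r) (by omega), mul_zero, smul_zero])]
                apply Finset.sum_nbij' (fun k => k + r) (fun j => j - r)
                all_goals intro x hx
                all_goals simp only [Finset.mem_range, Finset.mem_Icc] at *
                all_goals try omega
                have e1 : ((x + r : ℕ) : ℤ) - r + 1 = (x : ℤ) + 1 := by push_cast; ring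
                have e2 : (m : ℤ) - ((x + r : ℕ) : ℤ) = (m : ℤ) - x - r := by push_cast; ring
                have e3 : (n : ℤ) - ((x + r : ℕ) : ℤ) = (n : ℤ) - x - r := by push_cast; ring
                rw [e1, e2, e3]
              rw [Finset.sum_congr rfl step1]
              have swap := Finset.sum_comm'
                (s := Finset.Icc 1 n) (t := fun r => Finset.Icc r n)
                (t' := Finset.range (n + 1)) (s' := fun j => Finset.Icc 1 j)
                (h := by
                  intro x y
                  simp only [Finset.mem_Icc, Finset.mem_range]
                  omega)
                (f := fun r j =>
                  ((RatFunc.X ^ (r : ℤ) + RatFunc.X ^ (-(r : ℤ))) * qint ((j : ℤ) - r + 1)) •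
                    (P1 ((m : ℤ) - j) * Q1 ((n : ℤ) - j)))
              rw [swap]
              refine Finset.sum_congr rfl fun j _ => ?_
              rw [← qint_sum_identity j, Finset.sum_smul]
        _ = (n : RatFunc ℚ) • ∑ k ∈ Finset.range (n + 1),
              qint ((k : ℤ) + 1) • (P1 ((m : ℤ) - k) * Q1 ((n : ℤ) - k)) := by
            rw [Finset.smul_sum, ← Finset.sum_add_distrib]
            refine Finset.sum_congr rfl fun k hk => ?_
            simp only [Finset.mem_range] at hk
            rw [smul_smul, ← add_smul]
            congr 1
            have : ((n - k : ℕ) : RatFunc ℚ) = (n : RatFunc ℚ) - k := by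
              have h' : ((n - k : ℕ) : ℤ) = (n : ℤ) - k := by omega
              exact_mod_cast congrArg (fun t : ℤ => (t : RatFunc ℚ)) h'
            rw [this]
            ring
  -- pass from range (n+1) to range (min m n + 1)
  rw [aux n]
  symm
  apply Finset.sum_subset (Finset.range_subset_range.mpr (by omega))
  intro k hk hk'
  simp only [Finset.mem_range] at hk hk'
  rw [hP1neg ((m : ℤ) - k) (by omega), zero_mul, smul_zero]
end
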